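/- Let U ~ N(μ, σ²) and V = min(U, 2μ - U). Then the moment generating function of V is M_V(t) = E[e^{tV}] = 2·e^{μt + σ²t²/2}·Φ(-σt), where Φ is the standard normal CDF. -/

import Mathlib

open MeasureTheory ProbabilityTheory Set Real
open scoped NNReal ENNReal

lemma my_integral_comp_mul_add_Iic (g : ℝ → ℝ) (a c : ℝ) {b : ℝ} (hb : 0 < b) :
    ∫ x in Set.Iic a, g (b * x + c) = b⁻¹ * ∫ x in Set.Iic (b * a + c), g x := by
  rw [← integral_indicator measurableSet_Iic, ← integral_indicator measurableSet_Iic]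
  have h : ∀ x : ℝ, Set.indicator (Set.Iic a) (fun x => g (b * x + c)) x
      = Set.indicator (Set.Iic (b * a + c)) g (b * x + c) := by
    intro x
    by_cases hx : x ≤ a
    · rw [Set.indicator_of_mem (Set.mem_Iic.mpr hx),
        Set.indicator_of_mem (Set.mem_Iic.mpr
          (add_le_add_left (mul_le_mul_of_nonneg_left hx hb.le) c))]
    · have hm1 : x ∉ Set.Iic a := fun hmem => hx (Set.mem_Iic.mp hmem)
      have hm2 : b * x + c ∉ Set.Iic (b * a + c) := fun hmem =>
        hx (le_of_mul_le_mul_left (le_of_add_le_add_right (Set.mem_Iic.mp hmem)) hb)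
      rw [Set.indicator_of_notMem hm1, Set.indicator_of_notMem hm2]
  simp_rw [h]
  have h3 : (fun x : ℝ => Set.indicator (Set.Iic (b * a + c)) g (b * x + c))
      = fun x : ℝ => (fun y : ℝ => Set.indicator (Set.Iic (b * a + c)) g (b * y)) (x + c / b) := by
    funext x
    simp only
    congr 1
    field_simp
  rw [h3, integral_add_right_eq_self
    (fun y => Set.indicator (Set.Iic (b * a + c)) g (b * y)) (c / b),
    Measure.integral_comp_mul_left (Set.indicator (Set.Iic (b * a + c)) g) b,
    abs_of_pos (inv_pos.mpr hb), smul_eq_mul]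

lemma my_integral_comp_sub_Ioi (g : ℝ → ℝ) (a c : ℝ) :
    ∫ x in Set.Ioi a, g (c - x) = ∫ x in Set.Iic (c - a), g x := by
  rw [← integral_indicator measurableSet_Ioi]
  have h : ∀ x : ℝ, Set.indicator (Set.Ioi a) (fun x => g (c - x)) x
      = Set.indicator (Set.Iio (c - a)) g (c - x) := by
    intro x
    by_cases hx : a < x
    · rw [Set.indicator_of_mem (Set.mem_Ioi.mpr hx),
        Set.indicator_of_mem (Set.mem_Iio.mpr (by linarith))]
    · have hm1 : x ∉ Set.Ioi a := fun hmem => hx (Set.mem_Ioi.mp hmem)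
      have hm2 : c - x ∉ Set.Iio (c - a) := fun hmem => hx (by
        have := Set.mem_Iio.mp hmem; linarith)
      rw [Set.indicator_of_notMem hm1, Set.indicator_of_notMem hm2]
  simp_rw [h]
  have h3 : (fun x : ℝ => Set.indicator (Set.Iio (c - a)) g (c - x))
      = fun x : ℝ => (fun y : ℝ => Set.indicator (Set.Iio (c - a)) g (-y)) (x + -c) := by
    funext x
    simp only
    congr 1
    ring
  rw [h3, integral_add_right_eq_self
    (fun y => Set.indicator (Set.Iio (c - a)) g (-y)) (-c),
    integral_neg_eq_self (Set.indicator (Set.Iio (c - a)) g) volume,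
    integral_indicator measurableSet_Iio]
  exact setIntegral_congr_set Iio_ae_eq_Iic

set_option maxHeartbeats 1000000 in
theorem stmt_3 (μ σ t : ℝ) (hσ : 0 < σ) :
    ∫ x, Real.exp (t * min x (2 * μ - x)) ∂(gaussianReal μ ⟨σ ^ 2, sq_nonneg σ⟩) =
      2 * Real.exp (μ * t + σ ^ 2 * t ^ 2 / 2) *
        ((1 / Real.sqrt (2 * Real.pi)) * ∫ x in Set.Iic (-σ * t), Real.exp (-x ^ 2 / 2)) := by
  set v : NNReal := ⟨σ ^ 2, sq_nonneg σ⟩ with hv_def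
  have hσ2 : (0:ℝ) < σ ^ 2 := by positivity
  have hv : v ≠ 0 := by
    intro h
    rw [hv_def] at h
    exact hσ2.ne' (congrArg NNReal.toReal h)
  have hvr : (v : ℝ) = σ ^ 2 := rfl
  set c₀ : ℝ := (Real.sqrt (2 * Real.pi * σ ^ 2))⁻¹ with hc₀
  have hpdf : ∀ x : ℝ, gaussianPDFReal μ v x = c₀ * Real.exp (-(x - μ) ^ 2 / (2 * σ ^ 2)) := by
    intro x
    rw [gaussianPDFReal, hvr]
  -- step 0: write as integral over volume with density
  have h0 : ∀ g : ℝ → ℝ, ∫ x, g x ∂(gaussianReal μ v)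
      = ∫ x, gaussianPDFReal μ v x * g x := by
    intro g
    rw [gaussianReal_of_var_ne_zero _ hv, gaussianPDF_def]
    have : (fun x => ENNReal.ofReal (gaussianPDFReal μ v x))
        = fun x => ((Real.toNNReal (gaussianPDFReal μ v x) : ℝ≥0) : ℝ≥0∞) := rfl
    rw [this, integral_withDensity_eq_integral_smul
      (measurable_gaussianPDFReal μ v).real_toNNReal g]
    congr 1
    ext x
    rw [NNReal.smul_def, smul_eq_mul, Real.coe_toNNReal _ (gaussianPDFReal_nonneg μ v x)]
  rw [h0]
  -- key pointwise identity (completing the square)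
  have key : ∀ x : ℝ, gaussianPDFReal μ v x * Real.exp (t * x)
      = Real.exp (μ * t + σ ^ 2 * t ^ 2 / 2) *
        (c₀ * Real.exp (-(x - (μ + σ ^ 2 * t)) ^ 2 / (2 * σ ^ 2))) := by
    intro x
    rw [hpdf x]
    rw [mul_assoc, ← Real.exp_add, mul_left_comm, ← Real.exp_add]
    congr 1
    field_simp
    ring
  -- integrability of pdf * exp (t * x)
  have hint : Integrable (fun x => gaussianPDFReal μ v x * Real.exp (t * x)) := by
    have hb : (0:ℝ) < (2 * σ ^ 2)⁻¹ := by positivity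
    have h1 : Integrable (fun x : ℝ => Real.exp (-(2 * σ ^ 2)⁻¹ * x ^ 2)) :=
      integrable_exp_neg_mul_sq hb
    have h2 := h1.comp_sub_right (μ + σ ^ 2 * t)
    have hI : Integrable
        (fun x : ℝ => Real.exp (-(x - (μ + σ ^ 2 * t)) ^ 2 / (2 * σ ^ 2))) := by
      have heq : ∀ x : ℝ, -(2 * σ ^ 2)⁻¹ * (x - (μ + σ ^ 2 * t)) ^ 2
          = -(x - (μ + σ ^ 2 * t)) ^ 2 / (2 * σ ^ 2) := fun x => by ring
      simp only [heq] at h2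
      exact h2
    simp_rw [key]
    exact (hI.const_mul c₀).const_mul _
  -- pdf is symmetric about μ
  have hsym : ∀ x : ℝ, gaussianPDFReal μ v x = gaussianPDFReal μ v (2 * μ - x) := by
    intro x
    rw [hpdf, hpdf]
    congr 3
    ring
  -- integrability of the full integrand
  have hintF : Integrable (fun x => gaussianPDFReal μ v x *
      Real.exp (t * min x (2 * μ - x))) := by
    have hint2 : Integrable (fun x => gaussianPDFReal μ v x *
        Real.exp (t * (2 * μ - x))) := by
      have : Integrable (fun x => gaussianPDFReal μ v (2 * μ - x) *
          Real.exp (t * (2 * μ - x))) :=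
        (hint.comp_sub_left (2 * μ))
      refine this.congr (Filter.Eventually.of_forall fun x => ?_)
      show gaussianPDFReal μ v (2 * μ - x) * Real.exp (t * (2 * μ - x))
          = gaussianPDFReal μ v x * Real.exp (t * (2 * μ - x))
      rw [← hsym]
    refine Integrable.mono' (hint.add hint2) ?_ (Filter.Eventually.of_forall fun x => ?_)
    · exact ((measurable_gaussianPDFReal μ v).mul
        (((measurable_id.min (measurable_const.sub measurable_id)).const_mul t).exp)).aestronglyMeasurable
    · have h1 : (0:ℝ) ≤ gaussianPDFReal μ v x := gaussianPDFReal_nonneg μ v x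
      rw [Real.norm_eq_abs, abs_of_nonneg (by positivity)]
      simp only [Pi.add_apply]
      rcases min_choice x (2 * μ - x) with h | h <;> rw [h] <;>
        nlinarith [mul_nonneg h1 (Real.exp_pos (t * x)).le,
          mul_nonneg h1 (Real.exp_pos (t * (2 * μ - x))).le]
  -- split the integral
  rw [← integral_add_compl measurableSet_Iic hintF, Set.compl_Iic]
  have hIic : ∫ x in Set.Iic μ, gaussianPDFReal μ v x * Real.exp (t * min x (2 * μ - x))
      = ∫ x in Set.Iic μ, gaussianPDFReal μ v x * Real.exp (t * x) := by
    refine setIntegral_congr_fun measurableSet_Iic fun x hx => ?_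
    have : min x (2 * μ - x) = x := min_eq_left (by simp only [Set.mem_Iic] at hx; linarith)
    rw [this]
  have hIoi : ∫ x in Set.Ioi μ, gaussianPDFReal μ v x * Real.exp (t * min x (2 * μ - x))
      = ∫ x in Set.Iic μ, gaussianPDFReal μ v x * Real.exp (t * x) := by
    have step1 : ∫ x in Set.Ioi μ, gaussianPDFReal μ v x * Real.exp (t * min x (2 * μ - x))
        = ∫ x in Set.Ioi μ, gaussianPDFReal μ v (2 * μ - x) * Real.exp (t * (2 * μ - x)) := by
      refine setIntegral_congr_fun measurableSet_Ioi fun x hx => ?_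
      have : min x (2 * μ - x) = 2 * μ - x :=
        min_eq_right (by simp only [Set.mem_Ioi] at hx; linarith)
      rw [this, ← hsym]
    rw [step1, my_integral_comp_sub_Ioi
      (fun y => gaussianPDFReal μ v y * Real.exp (t * y)) μ (2 * μ)]
    have h2μ : 2 * μ - μ = μ := by ring
    rw [h2μ]
  rw [hIic, hIoi, ← two_mul]
  -- compute the half-line integral
  simp_rw [key]
  rw [integral_const_mul]
  have hchange : ∫ x in Set.Iic μ, c₀ * Real.exp (-(x - (μ + σ ^ 2 * t)) ^ 2 / (2 * σ ^ 2))
      = (1 / Real.sqrt (2 * Real.pi)) * ∫ x in Set.Iic (-σ * t), Real.exp (-x ^ 2 / 2) := by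
    rw [integral_const_mul]
    have hrw : ∀ x : ℝ, Real.exp (-(x - (μ + σ ^ 2 * t)) ^ 2 / (2 * σ ^ 2))
        = (fun y => Real.exp (-y ^ 2 / 2)) (σ⁻¹ * x + -((μ + σ ^ 2 * t) / σ)) := by
      intro x
      simp only
      congr 1
      field_simp
      ring
    simp_rw [hrw]
    rw [my_integral_comp_mul_add_Iic (fun y => Real.exp (-y ^ 2 / 2)) μ
      (-((μ + σ ^ 2 * t) / σ)) (inv_pos.mpr hσ), inv_inv]
    have harg : σ⁻¹ * μ + -((μ + σ ^ 2 * t) / σ) = -σ * t := by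
      field_simp
      ring
    rw [harg]
    have hc : c₀ * σ = 1 / Real.sqrt (2 * Real.pi) := by
      rw [hc₀, Real.sqrt_mul (by positivity) (σ ^ 2), Real.sqrt_sq hσ.le]
      field_simp
    rw [← mul_assoc, hc]
  rw [hchange]
  ring
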